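/- Let f : ℝ → ℝ be a function whose zero set is exactly {0} ∪ {1/n : n ∈ ℕ}. Suppose φ(ζ) = (z(ζ), w₁(ζ), w₂(ζ)) is a nonconstant continuous map from the closed unit disc to ℂ³, holomorphic on the open disc, such that for all ζ on the unit circle, w₁(ζ) = |z(ζ)|² and w₂(ζ) = |z(ζ)|² + f(|z(ζ)|²)·Re z(ζ). Then there exists n ∈ ℕ such that |z(ζ)| = 1/√n for all ζ on the unit circle, and w₁ ≡ w₂ ≡ 1/n on the closed disc. -/

import Mathlib

open Metric Complex Set

lemma const_of_im_zero_on_sphere (g : ℂ → ℂ)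
    (hc : ContinuousOn g (closedBall 0 1))
    (hd : DifferentiableOn ℂ g (ball 0 1))
    (him : ∀ ζ ∈ sphere (0 : ℂ) 1, (g ζ).im = 0) :
    ∀ ζ ∈ closedBall (0 : ℂ) 1, g ζ = g 1 := by
  have hclB : closure (ball (0 : ℂ) 1) = closedBall 0 1 := closure_ball 0 one_ne_zero
  have hfr : frontier (ball (0 : ℂ) 1) = sphere 0 1 := frontier_ball 0 one_ne_zero
  have key : ∀ s : ℂ, s.re = 0 → ∀ ζ ∈ closedBall (0 : ℂ) 1, (s * g ζ).re ≤ 0 := by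
    intro s hs ζ hζ
    have hdc : DiffContOnCl ℂ (fun ζ => Complex.exp (s * g ζ)) (ball 0 1) := by
      refine ⟨(hd.const_mul _).cexp, ?_⟩
      rw [hclB]
      exact ((hc.const_smul s).cexp)
    have hb := Complex.norm_le_of_forall_mem_frontier_norm_le isBounded_ball hdc
      (C := 1) ?_ (by rwa [hclB])
    · rw [show ‖cexp (s * g ζ)‖ = Real.exp ((s * g ζ).re) from Complex.norm_exp _] at hb
      exact Real.exp_le_exp.mp (by rwa [Real.exp_zero])
    · intro w hw
      rw [hfr] at hw
      have h0 := him w hw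
      rw [show ‖cexp (s * g w)‖ = Real.exp ((s * g w).re) from Complex.norm_exp _]
      simp [Complex.mul_re, h0, hs]
  have him' : ∀ ζ ∈ closedBall (0 : ℂ) 1, (g ζ).im = 0 := by
    intro ζ hζ
    have h1 := key I (by simp) ζ hζ
    have h2 := key (-I) (by simp) ζ hζ
    simp [Complex.mul_re] at h1 h2
    linarith
  set u : ℂ → ℂ := fun ζ => Complex.exp (I * g ζ) with hu
  have hnorm : ∀ ζ ∈ ball (0 : ℂ) 1, ‖u ζ‖ = 1 := by
    intro ζ hζ
    rw [show ‖u ζ‖ = Real.exp ((I * g ζ).re) from Complex.norm_exp _]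
    simp [Complex.mul_re, him' ζ (ball_subset_closedBall hζ)]
  have hmax : IsMaxOn (norm ∘ u) (ball (0 : ℂ) 1) 0 := by
    intro x hx
    simp only [Function.comp, mem_setOf_eq, hnorm x hx, hnorm 0 (by simp)]
    exact le_refl 1
  have huconst : EqOn u (Function.const ℂ (u 0)) (ball 0 1) :=
    Complex.eqOn_of_isPreconnected_of_isMaxOn_norm (convex_ball _ _).isPreconnected
      isOpen_ball ((hd.const_mul _).cexp) (by simp) hmax
  have hg0 : ∀ x ∈ ball (0 : ℂ) 1, fderivWithin ℂ g (ball 0 1) x = 0 := by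
    intro x hx
    have hgx : DifferentiableAt ℂ g x := hd.differentiableAt (isOpen_ball.mem_nhds hx)
    have hIg : HasDerivAt (fun ζ => I * g ζ) (I * deriv g x) x := hgx.hasDerivAt.const_mul I
    have hux : HasDerivAt u (Complex.exp (I * g x) * (I * deriv g x)) x := hIg.cexp
    have hu0 : deriv u x = 0 := by
      have hev : u =ᶠ[nhds x] Function.const ℂ (u 0) :=
        Filter.eventuallyEq_of_mem (isOpen_ball.mem_nhds hx) huconst
      rw [hev.deriv_eq]
      exact deriv_const _ _
    have hz := hux.deriv
    rw [hu0] at hz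
    have hderiv : deriv g x = 0 := by
      rcases mul_eq_zero.mp hz.symm with h | h
      · exact absurd h (Complex.exp_ne_zero _)
      · rcases mul_eq_zero.mp h with h2 | h2
        · exact absurd h2 I_ne_zero
        · exact h2
    have hfd : HasFDerivAt g (0 : ℂ →L[ℂ] ℂ) x := by
      have h := (hderiv ▸ hgx.hasDerivAt : HasDerivAt g 0 x).hasFDerivAt
      have e : ContinuousLinearMap.toSpanSingleton ℂ (0 : ℂ) = 0 := by ext; simp
      rwa [e] at h
    rw [hfd.hasFDerivWithinAt.fderivWithin (isOpen_ball.uniqueDiffWithinAt hx)]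
  have hconst : ∀ x ∈ ball (0 : ℂ) 1, g x = g 0 := fun x hx =>
    (convex_ball (0:ℂ) 1).is_const_of_fderivWithin_eq_zero hd hg0 hx (by simp)
  have heq : EqOn g (Function.const ℂ (g 0)) (closedBall (0:ℂ) 1) := by
    refine Set.EqOn.of_subset_closure (fun x hx => hconst x hx) hc continuousOn_const
      ball_subset_closedBall (by rw [hclB])
  intro ζ hζ
  rw [heq hζ, heq (by simp : (1:ℂ) ∈ closedBall (0:ℂ) 1)]
  rfl


theorem discrete_family_of_attached_discs
    (f : ℝ → ℝ)
    (hf : {x : ℝ | f x = 0} = {0} ∪ {x : ℝ | ∃ n : ℕ, 0 < n ∧ x = 1 / (n : ℝ)})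
    (z w₁ w₂ : ℂ → ℂ)
    (hzc : ContinuousOn z (closedBall 0 1))
    (hzd : DifferentiableOn ℂ z (ball 0 1))
    (hw₁c : ContinuousOn w₁ (closedBall 0 1))
    (hw₁d : DifferentiableOn ℂ w₁ (ball 0 1))
    (hw₂c : ContinuousOn w₂ (closedBall 0 1))
    (hw₂d : DifferentiableOn ℂ w₂ (ball 0 1))
    (hnonconst : ¬ ∀ ζ ∈ closedBall (0 : ℂ) 1, ∀ ζ' ∈ closedBall (0 : ℂ) 1,
        z ζ = z ζ' ∧ w₁ ζ = w₁ ζ' ∧ w₂ ζ = w₂ ζ')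
    (hb₁ : ∀ ζ ∈ sphere (0 : ℂ) 1, w₁ ζ = ((‖z ζ‖ ^ 2 : ℝ) : ℂ))
    (hb₂ : ∀ ζ ∈ sphere (0 : ℂ) 1,
      w₂ ζ = ((‖z ζ‖ ^ 2 + f (‖z ζ‖ ^ 2) * (z ζ).re : ℝ) : ℂ)) :
    ∃ n : ℕ, 0 < n ∧
      (∀ ζ ∈ sphere (0 : ℂ) 1, ‖z ζ‖ = 1 / Real.sqrt n) ∧
      (∀ ζ ∈ closedBall (0 : ℂ) 1, w₁ ζ = (1 / (n : ℂ)) ∧ w₂ ζ = (1 / (n : ℂ))) := by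
  have h1s : (1 : ℂ) ∈ sphere (0 : ℂ) 1 := by simp
  have hsub : sphere (0 : ℂ) 1 ⊆ closedBall 0 1 := sphere_subset_closedBall
  have hW₁ : ∀ ζ ∈ closedBall (0 : ℂ) 1, w₁ ζ = w₁ 1 :=
    const_of_im_zero_on_sphere w₁ hw₁c hw₁d (fun ζ hζ => by rw [hb₁ ζ hζ]; exact Complex.ofReal_im _)
  have hW₂ : ∀ ζ ∈ closedBall (0 : ℂ) 1, w₂ ζ = w₂ 1 :=
    const_of_im_zero_on_sphere w₂ hw₂c hw₂d (fun ζ hζ => by rw [hb₂ ζ hζ]; exact Complex.ofReal_im _)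
  set a : ℝ := ‖z 1‖ ^ 2 with ha
  have hw₁1 : w₁ 1 = (a : ℂ) := hb₁ 1 h1s
  have hza : ∀ ζ ∈ sphere (0 : ℂ) 1, ‖z ζ‖ ^ 2 = a := by
    intro ζ hζ
    have h := (hb₁ ζ hζ).symm.trans ((hW₁ ζ (hsub hζ)).trans hw₁1)
    exact_mod_cast h
  set b : ℝ := a + f a * (z 1).re with hbdef
  have hw₂1 : w₂ 1 = (b : ℂ) := by rw [hb₂ 1 h1s]
  have hre : ∀ ζ ∈ sphere (0 : ℂ) 1, f a * (z ζ).re = b - a := by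
    intro ζ hζ
    have h := (hb₂ ζ hζ).symm.trans ((hW₂ ζ (hsub hζ)).trans hw₂1)
    rw [hza ζ hζ] at h
    have : a + f a * (z ζ).re = b := by exact_mod_cast h
    linarith
  -- z is not constant on the closed ball
  have hznc : ¬ ∀ ζ ∈ closedBall (0 : ℂ) 1, z ζ = z 1 := by
    intro hzconst
    exact hnonconst fun ζ hζ ζ' hζ' =>
      ⟨(hzconst ζ hζ).trans (hzconst ζ' hζ').symm,
       (hW₁ ζ hζ).trans (hW₁ ζ' hζ').symm,
       (hW₂ ζ hζ).trans (hW₂ ζ' hζ').symm⟩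
  have hfa : f a = 0 := by
    by_contra hne
    set k : ℝ := (b - a) / f a with hk
    have hrek : ∀ ζ ∈ sphere (0 : ℂ) 1, (z ζ).re = k := by
      intro ζ hζ
      rw [hk, eq_div_iff hne, mul_comm]
      exact hre ζ hζ
    set ψ : ℂ → ℂ := fun ζ => (-I) * z ζ + I * (k : ℂ) with hψ
    have hψc : ContinuousOn ψ (closedBall 0 1) := ((hzc.const_smul (-I)).add continuousOn_const)
    have hψd : DifferentiableOn ℂ ψ (ball 0 1) := ((hzd.const_mul (-I)).add_const _)
    have hψim : ∀ ζ ∈ sphere (0 : ℂ) 1, (ψ ζ).im = 0 := by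
      intro ζ hζ
      simp [hψ, Complex.add_im, Complex.mul_im, hrek ζ hζ]
    have hψconst := const_of_im_zero_on_sphere ψ hψc hψd hψim
    refine hznc fun ζ hζ => ?_
    have h := hψconst ζ hζ
    simp only [hψ] at h
    have h2 : (-I) * z ζ = (-I) * z 1 := by linear_combination h
    exact mul_left_cancel₀ (by simp [I_ne_zero] : (-I : ℂ) ≠ 0) h2
  have hamem : a ∈ {x : ℝ | f x = 0} := hfa
  rw [hf] at hamem
  rcases hamem with h0 | ⟨n, hn, hna⟩
  · -- a = 0 : z vanishes on the sphere, hence everywhere; contradiction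
    exfalso
    simp only [Set.mem_singleton_iff] at h0
    have hz0 : ∀ ζ ∈ closedBall (0 : ℂ) 1, z ζ = 0 := by
      have hdc : DiffContOnCl ℂ z (ball 0 1) :=
        ⟨hzd, by rw [closure_ball 0 one_ne_zero]; exact hzc⟩
      intro ζ hζ
      have hb := Complex.norm_le_of_forall_mem_frontier_norm_le isBounded_ball hdc (C := 0)
        (fun w hw => by
          rw [frontier_ball 0 one_ne_zero] at hw
          have := hza w hw
          rw [h0] at this
          nlinarith [norm_nonneg (z w)])
        (by rwa [closure_ball 0 one_ne_zero])
      exact norm_le_zero_iff.mp hb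
    exact hznc fun ζ hζ => (hz0 ζ hζ).trans (hz0 1 (hsub h1s)).symm
  · refine ⟨n, hn, ?_, ?_⟩
    · intro ζ hζ
      have h := hza ζ hζ
      rw [hna] at h
      have : ‖z ζ‖ = Real.sqrt (1 / n) := by
        rw [← h, Real.sqrt_sq (norm_nonneg _)]
      rw [this, one_div, Real.sqrt_inv, one_div]
    · intro ζ hζ
      have hb0 : b = a := by rw [hbdef, hfa]; ring
      constructor
      · rw [hW₁ ζ hζ, hw₁1, hna]
        push_cast
        ring
      · rw [hW₂ ζ hζ, hw₂1, hb0, hna]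
        push_cast
        ring
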